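/- arXiv:2411.10197 — 3 statements merged into one kernel-verified Lean document; each statement's English description precedes it below -/
import Mathlib

section
/- The limit belief set equals the theory of the believed premisses: let Δ∞ ⊆ Σ be the unique set satisfying Δ∞ = Σ \ Out_{A∞}(Δ∞), and let B∞ = {ψ | there is a supporting argument P ⇒ ψ in A∞ with P ⊆ Δ∞}. Then B∞ = Th(Δ∞) = {φ | Δ∞ semantically entails φ}. -/
/-- Propositional formulas over atoms `α`, built with `¬` and `→`. -/
inductive Fml (α : Type) : Type
  | atom : α → Fml α
  | neg  : Fml α → Fml α
  | imp  : Fml α → Fml α → Fml α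

/-- Satisfaction of a formula by an interpretation (a set of atoms). -/
def Fml.sat {α : Type} (M : Set α) : Fml α → Prop
  | .atom a => a ∈ M
  | .neg φ => ¬ Fml.sat M φ
  | .imp φ ψ => Fml.sat M φ → Fml.sat M ψ

/-- Semantic entailment `S ⊨ φ`. -/
def Entails {α : Type} (S : Set (Fml α)) (φ : Fml α) : Prop :=
  ∀ M : Set α, (∀ ψ ∈ S, Fml.sat M ψ) → Fml.sat M φ

/-- Satisfiability of a set of formulas. -/
def Satisfiable {α : Type} (S : Set (Fml α)) : Prop :=
  ∃ M : Set α, ∀ ψ ∈ S, Fml.sat M ψ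

/-- Propositional tautology. -/
def Tautology {α : Type} (φ : Fml α) : Prop :=
  ∀ M : Set α, Fml.sat M φ

/-- `prec` is a reliability relation on `Sg`: a strict partial order
(irreflexive, asymmetric, transitive) relating only members of `Sg`. -/
def IsReliability {β : Type} (Sg : Set β) (prec : β → β → Prop) : Prop :=
  (∀ a b, prec a b → a ∈ Sg ∧ b ∈ Sg) ∧
  (∀ a, ¬ prec a a) ∧
  (∀ a b, prec a b → ¬ prec b a) ∧
  (∀ a b c, prec a b → prec b c → prec a c)

/-- `lt` is a strict linear order on `Sg` extending `prec`. -/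
def IsLinearExt {β : Type} (Sg : Set β) (prec lt : β → β → Prop) : Prop :=
  (∀ a b, lt a b → a ∈ Sg ∧ b ∈ Sg) ∧
  (∀ a, ¬ lt a a) ∧
  (∀ a b c, lt a b → lt b c → lt a c) ∧
  (∀ a ∈ Sg, ∀ b ∈ Sg, a ≠ b → lt a b ∨ lt b a) ∧
  (∀ a b, prec a b → lt a b)

/-- Arguments: supporting arguments `P ⇒ φ` and undermining arguments `P ⇏ φ`. -/
inductive Arg (α : Type) : Type
  | sup : Set (Fml α) → Fml α → Arg α
  | und : Set (Fml α) → Fml α → Arg α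

/-- The set `A∞` of derivable arguments, as an inductive predicate:
initial arguments, the axiom rule, modus ponens and the contradiction rule. -/
inductive Derivable {α : Type} (Sg : Set (Fml α)) (lt : Fml α → Fml α → Prop) :
    Arg α → Prop
  | initial {φ} (h : φ ∈ Sg) : Derivable Sg lt (.sup {φ} φ)
  | ax {φ} (h : Tautology φ) : Derivable Sg lt (.sup ∅ φ)
  | mp {P Q φ ψ} (h1 : Derivable Sg lt (.sup P φ))
      (h2 : Derivable Sg lt (.sup Q (.imp φ ψ))) :
      Derivable Sg lt (.sup (P ∪ Q) ψ)
  | contra {P Q φ η} (h1 : Derivable Sg lt (.sup P φ))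
      (h2 : Derivable Sg lt (.sup Q (.neg φ)))
      (hmem : η ∈ P ∪ Q) (hmin : ∀ x ∈ P ∪ Q, x ≠ η → lt η x) :
      Derivable Sg lt (.und ((P ∪ Q) \ {η}) η)

/-- The set `A∞` of derivable arguments. -/
def Ainf {α : Type} (Sg : Set (Fml α)) (lt : Fml α → Fml α → Prop) : Set (Arg α) :=
  {a | Derivable Sg lt a}

/-- `Out_A(S)`: premisses ruled out by undermining arguments in `A`
whose antecedents lie in `S`. -/
def OutA {α : Type} (A : Set (Arg α)) (S : Set (Fml α)) : Set (Fml α) :=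
  {φ | ∃ P, Arg.und P φ ∈ A ∧ P ⊆ S}

open scoped Classical in
/-- The most reliable consistent set of premisses built from an enumeration. -/
noncomputable def mrcBuild {α : Type} (l : List (Fml α)) : Set (Fml α) :=
  l.foldl (fun D σ => if Satisfiable (insert σ D) then insert σ D else D) ∅

/-- `l` enumerates `Sg` so that more reliable premisses come first:
whenever `l[j] ≺ l[k]` one has `k < j`. -/
def IsEnum {β : Type} (Sg : Set β) (prec : β → β → Prop) (l : List β) : Prop :=
  l.Nodup ∧ (∀ x, x ∈ l ↔ x ∈ Sg) ∧
  ∀ (j k : Fin l.length), prec (l.get j) (l.get k) → (k : ℕ) < (j : ℕ)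

/-- `D` is a most reliable consistent set of premisses of `⟨Sg, prec⟩`. -/
def MRC {α : Type} (Sg : Set (Fml α)) (prec : Fml α → Fml α → Prop)
    (D : Set (Fml α)) : Prop :=
  ∃ l : List (Fml α), IsEnum Sg prec l ∧ D = mrcBuild l

/-- `Prem(M)`: the premisses of `Sg` satisfied by interpretation `M`. -/
def PremOf {α : Type} (Sg : Set (Fml α)) (M : Set α) : Set (Fml α) :=
  {φ | φ ∈ Sg ∧ Fml.sat M φ}

/-- The preference relation `M ⊏ N` on interpretations. -/
def Pref {α : Type} (Sg : Set (Fml α)) (prec : Fml α → Fml α → Prop)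
    (M N : Set α) : Prop :=
  PremOf Sg M ≠ PremOf Sg N ∧
  ∀ φ ∈ PremOf Sg M \ PremOf Sg N, ∃ ψ ∈ PremOf Sg N \ PremOf Sg M, prec φ ψ

/-- `Th(⟨Sg, prec⟩)`: formulas entailed by every most reliable consistent set. -/
def ThR {α : Type} (Sg : Set (Fml α)) (prec : Fml α → Fml α → Prop) : Set (Fml α) :=
  {φ | ∀ D, MRC Sg prec D → Entails D φ}

/-- The reliability relation of the `a`-revised theory:
`prec` restricted to `Sg \ {a}`, with `a` strictly more reliable than
every other premiss. -/
def RevPrec {α : Type} (Sg : Set (Fml α)) (prec : Fml α → Fml α → Prop) (a : Fml α) :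
    Fml α → Fml α → Prop :=
  fun x y => (prec x y ∧ x ∈ Sg \ {a} ∧ y ∈ Sg \ {a}) ∨ (x ∈ Sg \ {a} ∧ y = a)

/-- Soundness of supporting arguments. -/
theorem derivable_sup_entails {α : Type} {Sg : Set (Fml α)}
    {lt : Fml α → Fml α → Prop} {a : Arg α} (h : Derivable Sg lt a) :
    ∀ P ψ, a = Arg.sup P ψ → Entails P ψ := by
  induction h with
  | initial h =>
      rintro P ψ ⟨rfl, rfl⟩
      intro M hM; exact hM _ rfl
  | ax h =>
      rintro P ψ ⟨rfl, rfl⟩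
      intro M _; exact h M
  | mp h1 h2 ih1 ih2 =>
      rintro R χ ⟨rfl, rfl⟩
      intro M hM
      exact ih2 _ _ rfl M (fun x hx => hM x (Or.inr hx))
        (ih1 _ _ rfl M (fun x hx => hM x (Or.inl hx)))
  | contra h1 h2 hmem hmin ih1 ih2 =>
      rintro P ψ ⟨⟩

theorem sat_foldr {α : Type} (M : Set α) (l : List (Fml α)) (φ : Fml α) :
    Fml.sat M (l.foldr Fml.imp φ) ↔ ((∀ x ∈ l, Fml.sat M x) → Fml.sat M φ) := by
  induction l with
  | nil => simp [Fml.sat]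
  | cons a l ih =>
      simp only [List.foldr_cons, Fml.sat, ih, List.mem_cons]
      constructor
      · intro h hall; exact h (hall a (Or.inl rfl)) (fun x hx => hall x (Or.inr hx))
      · intro h ha hall; exact h (by rintro x (rfl | hx); exact ha; exact hall x hx)

theorem foldr_derivable {α : Type} (Sg : Set (Fml α)) (lt : Fml α → Fml α → Prop)
    (Δ : Set (Fml α)) (hΔSg : Δ ⊆ Sg) :
    ∀ (l : List (Fml α)) (φ : Fml α), (∀ x ∈ l, x ∈ Δ) →
      Tautology (l.foldr Fml.imp φ) →
      ∃ P, Derivable Sg lt (Arg.sup P φ) ∧ P ⊆ Δ := by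
  intro l
  induction l with
  | nil =>
      intro φ _ ht
      exact ⟨∅, Derivable.ax ht, by simp⟩
  | cons δ l ih =>
      intro φ hl ht
      have ht' : Tautology (l.foldr Fml.imp (Fml.imp δ φ)) := by
        intro M
        rw [sat_foldr]
        intro hall hδ
        have := ht M
        rw [sat_foldr] at this
        refine this ?_
        intro x hx
        rcases List.mem_cons.mp hx with rfl | hx
        · exact hδ
        · exact hall x hx
      obtain ⟨P, hP, hPΔ⟩ := ih (Fml.imp δ φ) (fun x hx => hl x (List.mem_cons_of_mem _ hx)) ht'
      have hδΔ : δ ∈ Δ := hl δ List.mem_cons_self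
      refine ⟨{δ} ∪ P, Derivable.mp (Derivable.initial (hΔSg hδΔ)) hP, ?_⟩
      rintro x (rfl | hx); exact hδΔ; exact hPΔ hx

/-- The limit belief set equals the theory of the believed
premisses: if `Δ∞ = Σ \ Out_{A∞}(Δ∞)` and
`B∞ = {ψ | ∃ (P ⇒ ψ) ∈ A∞, P ⊆ Δ∞}`, then `B∞ = Th(Δ∞)`. -/
theorem limit_belief_set_eq_theory {α : Type} (Sg : Set (Fml α))
    (hfin : Sg.Finite) (prec lt : Fml α → Fml α → Prop)
    (hprec : IsReliability Sg prec) (hlt : IsLinearExt Sg prec lt)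
    (Δ : Set (Fml α)) (hΔ : Δ = Sg \ OutA (Ainf Sg lt) Δ) :
    {ψ | ∃ P, Arg.sup P ψ ∈ Ainf Sg lt ∧ P ⊆ Δ} = {φ | Entails Δ φ} := by
  have hΔSg : Δ ⊆ Sg := by rw [hΔ]; exact Set.diff_subset
  have hΔfin : Δ.Finite := hfin.subset hΔSg
  ext φ
  simp only [Set.mem_setOf_eq]
  constructor
  · rintro ⟨P, hP, hPΔ⟩
    intro M hM
    exact derivable_sup_entails hP P φ rfl M (fun x hx => hM x (hPΔ hx))
  · intro hent
    set l := hΔfin.toFinset.toList with hl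
    have hmem : ∀ x, x ∈ l ↔ x ∈ Δ := by
      intro x; rw [hl, Finset.mem_toList, Set.Finite.mem_toFinset]
    have ht : Tautology (l.foldr Fml.imp φ) := by
      intro M
      rw [sat_foldr]
      intro hall
      exact hent M (fun ψ hψ => hall ψ ((hmem ψ).2 hψ))
    obtain ⟨P, hP, hPΔ⟩ := foldr_derivable Sg lt Δ hΔSg l φ (fun x hx => (hmem x).1 hx) ht
    exact ⟨P, hP, hPΔ⟩
end

section
/- The theorems of a reliability theory are the intersection of the limit belief sets: Th(⟨Σ, ≺⟩) = ⋂ { B∞^{≺'} | ≺' a strict linear order on Σ extending ≺ }, where B∞^{≺'} = {ψ | there is a supporting argument P ⇒ ψ in A∞^{≺'} with P ⊆ Δ∞^{≺'}} and Δ∞^{≺'} is the unique subset of Σ satisfying Δ∞^{≺'} = Σ \ Out_{A∞^{≺'}}(Δ∞^{≺'}). -/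
section Aux

variable {α : Type}

/-- cast lemma for supports -/
lemma derivable_cast {Sg : Set (Fml α)} {lt : Fml α → Fml α → Prop} {P P' : Set (Fml α)}
    {φ : Fml α} (h : Derivable Sg lt (.sup P φ)) (e : P = P') :
    Derivable Sg lt (.sup P' φ) := e ▸ h

lemma derivable_und_cast {Sg : Set (Fml α)} {lt : Fml α → Fml α → Prop} {P P' : Set (Fml α)}
    {φ : Fml α} (h : Derivable Sg lt (.und P φ)) (e : P = P') :
    Derivable Sg lt (.und P' φ) := e ▸ h

/-- Soundness: supports of derivable supporting arguments lie in Sg and entail conclusion. -/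
lemma derivable_sound {Sg : Set (Fml α)} {lt : Fml α → Fml α → Prop} {a : Arg α}
    (h : Derivable Sg lt a) :
    (∀ P φ, a = .sup P φ → P ⊆ Sg ∧ Entails P φ) := by
  induction h with
  | @initial φ h =>
      intro P ψ he; cases he
      refine ⟨by simpa using h, fun M hM => hM _ rfl⟩
  | @ax φ h =>
      intro P ψ he; cases he
      exact ⟨by simp, fun M _ => h M⟩
  | @mp P Q φ ψ h1 h2 ih1 ih2 =>
      intro P' ψ' he; cases he
      obtain ⟨hP, e1⟩ := ih1 P φ rfl
      obtain ⟨hQ, e2⟩ := ih2 Q (φ.imp ψ) rfl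
      refine ⟨Set.union_subset hP hQ, fun M hM => ?_⟩
      have hφ := e1 M (fun τ hτ => hM τ (Or.inl hτ))
      have hi := e2 M (fun τ hτ => hM τ (Or.inr hτ))
      exact hi hφ
  | contra h1 h2 hmem hmin ih1 ih2 =>
      intro P' ψ' he; cases he

/-- Inversion for undermining arguments. -/
lemma derivable_und_inv {Sg : Set (Fml α)} {lt : Fml α → Fml α → Prop} {P : Set (Fml α)}
    {η : Fml α} (h : Derivable Sg lt (.und P η)) :
    η ∈ Sg ∧ (∀ x ∈ P, lt η x) ∧ ¬ Satisfiable (insert η P) := by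
  cases h with
  | @contra P1 Q1 φ _ h1 h2 hmem hmin =>
      obtain ⟨hP1, e1⟩ := derivable_sound h1 P1 φ rfl
      obtain ⟨hQ1, e2⟩ := derivable_sound h2 Q1 (Fml.neg φ) rfl
      have hηSg : η ∈ Sg := by
        cases hmem with
        | inl h => exact hP1 h
        | inr h => exact hQ1 h
      refine ⟨hηSg, ?_, ?_⟩
      · intro x hx
        exact hmin x hx.1 hx.2
      · have he : insert η ((P1 ∪ Q1) \ {η}) = P1 ∪ Q1 := by
          ext x; constructor
          · rintro (rfl | ⟨hx, _⟩)
            · exact hmem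
            · exact hx
          · intro hx
            by_cases hxη : x = η
            · exact Or.inl hxη
            · exact Or.inr ⟨hx, hxη⟩
        rw [he]
        rintro ⟨M, hM⟩
        have hφ := e1 M (fun τ hτ => hM τ (Or.inl hτ))
        have hnφ := e2 M (fun τ hτ => hM τ (Or.inr hτ))
        exact hnφ hφ

/-- From entailment by the set of a list of premisses, build a derivation with
support exactly that set. -/
lemma derive_of_list {Sg : Set (Fml α)} {lt : Fml α → Fml α → Prop} :
    ∀ (lst : List (Fml α)), (∀ x ∈ lst, x ∈ Sg) → ∀ φ : Fml α,
      Entails {x | x ∈ lst} φ → Derivable Sg lt (.sup {x | x ∈ lst} φ)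
  | [], _, φ, h => by
      have hT : Tautology φ := fun M => h M (by simp)
      exact derivable_cast (Derivable.ax hT) (by ext x; simp)
  | ψ :: t, hsub, φ, h => by
      have h' : Entails {x | x ∈ t} (Fml.imp ψ φ) := by
        intro M hM
        intro hψ
        apply h M
        intro τ hτ
        rcases List.mem_cons.mp hτ with rfl | hτ
        · exact hψ
        · exact hM τ hτ
      have d1 := derive_of_list (Sg := Sg) (lt := lt) t (fun x hx => hsub x (List.mem_cons_of_mem _ hx)) (Fml.imp ψ φ) h'
      have d2 : Derivable Sg lt (.sup {ψ} ψ) :=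
        Derivable.initial (hsub ψ (List.mem_cons_self))
      have d3 := Derivable.mp d2 d1
      exact derivable_cast d3 (by ext x; simp)

/-- From entailment by a finite subset of Sg, build a derivation with that support. -/
lemma derive_of_entails {Sg : Set (Fml α)} {lt : Fml α → Fml α → Prop} {T : Set (Fml α)}
    (hT : T ⊆ Sg) (hTfin : T.Finite) {φ : Fml α} (h : Entails T φ) :
    Derivable Sg lt (.sup T φ) := by
  have he : {x | x ∈ hTfin.toFinset.toList} = T := by
    ext x; simp [Finset.mem_toList, Set.Finite.mem_toFinset]
  have := derive_of_list (Sg := Sg) (lt := lt) hTfin.toFinset.toList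
    (fun x hx => hT (by rw [← he]; exact hx)) φ (by rwa [he])
  exact derivable_cast this he

/-- Construct an undermining argument from an inconsistent reliable set. -/
lemma und_derive {Sg : Set (Fml α)} {lt : Fml α → Fml α → Prop}
    (hirr : ∀ a, ¬ lt a a) {P : Set (Fml α)} {η : Fml α}
    (hη : η ∈ Sg) (hP : P ⊆ Sg) (hPfin : P.Finite) (habove : ∀ x ∈ P, lt η x)
    (hunsat : ¬ Satisfiable (insert η P)) :
    Derivable Sg lt (.und P η) := by
  have hηP : η ∉ P := fun h => hirr η (habove η h)
  set S := insert η P with hS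
  have hSsub : S ⊆ Sg := Set.insert_subset hη hP
  have hSfin : S.Finite := hPfin.insert η
  have hent : ∀ ψ : Fml α, Entails S ψ := by
    intro ψ M hM; exact absurd ⟨M, hM⟩ hunsat
  have d1 : Derivable Sg lt (.sup S η) := derive_of_entails hSsub hSfin (hent η)
  have d2 : Derivable Sg lt (.sup S (Fml.neg η)) := derive_of_entails hSsub hSfin (hent _)
  have hmem : η ∈ S ∪ S := Or.inl (Set.mem_insert _ _)
  have hmin : ∀ x ∈ S ∪ S, x ≠ η → lt η x := by
    rintro x (hx | hx) hxη <;>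
    · rcases hx with rfl | hx
      · exact absurd rfl hxη
      · exact habove x hx
  have d3 := Derivable.contra d1 d2 hmem hmin
  refine derivable_und_cast d3 ?_
  rw [Set.union_self]
  ext x
  simp only [Set.mem_diff, Set.mem_singleton_iff, hS, Set.mem_insert_iff]
  constructor
  · rintro ⟨rfl | hx, hxη⟩
    · exact absurd rfl hxη
    · exact hx
  · intro hx; exact ⟨Or.inr hx, fun e => hηP (e ▸ hx)⟩

/-- Characterization of OutA for derivable arguments. -/
lemma out_char {Sg : Set (Fml α)} {lt : Fml α → Fml α → Prop}
    (hirr : ∀ a, ¬ lt a a) {Δ : Set (Fml α)} (hΔ : Δ ⊆ Sg) (hfin : Sg.Finite)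
    (η : Fml α) :
    η ∈ OutA (Ainf Sg lt) Δ ↔ (η ∈ Sg ∧ ¬ Satisfiable (insert η {q ∈ Δ | lt η q})) := by
  constructor
  · rintro ⟨P, hund, hPΔ⟩
    obtain ⟨hηSg, habove, hunsat⟩ := derivable_und_inv hund
    refine ⟨hηSg, fun hsat => hunsat ?_⟩
    obtain ⟨M, hM⟩ := hsat
    refine ⟨M, fun ψ hψ => hM ψ ?_⟩
    rcases hψ with rfl | hψ
    · exact Set.mem_insert _ _
    · exact Set.mem_insert_of_mem _ ⟨hPΔ hψ, habove ψ hψ⟩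
  · rintro ⟨hηSg, hunsat⟩
    refine ⟨{q ∈ Δ | lt η q}, ?_, fun x hx => hx.1⟩
    exact und_derive hirr hηSg (fun x hx => hΔ hx.1)
      ((hfin.subset hΔ).subset (fun x hx => hx.1)) (fun x hx => hx.2) hunsat

/-- Fixed point characterization. -/
def FP (Sg : Set (Fml α)) (lt : Fml α → Fml α → Prop) (Δ : Set (Fml α)) : Prop :=
  Δ ⊆ Sg ∧ ∀ η ∈ Sg, (η ∈ Δ ↔ Satisfiable (insert η {q ∈ Δ | lt η q}))

lemma fp_iff {Sg : Set (Fml α)} {lt : Fml α → Fml α → Prop}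
    (hirr : ∀ a, ¬ lt a a) (hfin : Sg.Finite) (Δ : Set (Fml α)) :
    Δ = Sg \ OutA (Ainf Sg lt) Δ ↔ FP Sg lt Δ := by
  constructor
  · intro h
    have hΔ : Δ ⊆ Sg := by rw [h]; exact Set.diff_subset
    refine ⟨hΔ, fun η hη => ?_⟩
    have h1 := Set.ext_iff.mp h η
    simp only [Set.mem_diff] at h1
    rw [out_char hirr hΔ hfin η] at h1
    constructor
    · intro hmem
      by_contra hns
      exact ((h1.mp hmem).2) ⟨hη, hns⟩
    · intro hsat
      exact h1.mpr ⟨hη, fun hc => hc.2 hsat⟩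
  · rintro ⟨hΔ, hiff⟩
    ext η
    rw [Set.mem_diff, out_char hirr hΔ hfin η]
    constructor
    · intro hmem
      have hη := hΔ hmem
      exact ⟨hη, fun hc => hc.2 ((hiff η hη).mp hmem)⟩
    · rintro ⟨hη, hc⟩
      apply (hiff η hη).mpr
      by_contra hns
      exact hc ⟨hη, hns⟩

/-- Uniqueness of fixed points. -/
lemma fp_unique {Sg : Set (Fml α)} {lt : Fml α → Fml α → Prop}
    (hirr : ∀ a, ¬ lt a a) (htr : ∀ a b c, lt a b → lt b c → lt a c)
    (hfin : Sg.Finite) {Δ1 Δ2 : Set (Fml α)}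
    (h1 : FP Sg lt Δ1) (h2 : FP Sg lt Δ2) : Δ1 = Δ2 := by
  have key : ∀ n : ℕ, ∀ η ∈ Sg, {x ∈ Sg | lt η x}.ncard < n → (η ∈ Δ1 ↔ η ∈ Δ2) := by
    intro n
    induction n with
    | zero => intro η _ hn; omega
    | succ n ih =>
        intro η hη hn
        have hQ : {q ∈ Δ1 | lt η q} = {q ∈ Δ2 | lt η q} := by
          ext q
          simp only [Set.mem_setOf_eq]
          constructor
          · rintro ⟨hq1, hlt⟩
            have hqSg := h1.1 hq1
            refine ⟨(ih q hqSg ?_).mp hq1, hlt⟩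
            have hss : {x ∈ Sg | lt q x} ⊂ {x ∈ Sg | lt η x} := by
              constructor
              · rintro x ⟨hx, hl⟩; exact ⟨hx, htr _ _ _ hlt hl⟩
              · intro hc
                exact hirr q (hc ⟨hqSg, hlt⟩).2
            have := Set.ncard_lt_ncard hss (hfin.subset (fun x hx => hx.1))
            omega
          · rintro ⟨hq2, hlt⟩
            have hqSg := h2.1 hq2
            refine ⟨(ih q hqSg ?_).mpr hq2, hlt⟩
            have hss : {x ∈ Sg | lt q x} ⊂ {x ∈ Sg | lt η x} := by
              constructor
              · rintro x ⟨hx, hl⟩; exact ⟨hx, htr _ _ _ hlt hl⟩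
              · intro hc
                exact hirr q (hc ⟨hqSg, hlt⟩).2
            have := Set.ncard_lt_ncard hss (hfin.subset (fun x hx => hx.1))
            omega
        rw [h1.2 η hη, h2.2 η hη, hQ]
  ext η
  constructor
  · intro h
    exact (key ({x ∈ Sg | lt η x}.ncard + 1) η (h1.1 h) (by omega)).mp h
  · intro h
    exact (key ({x ∈ Sg | lt η x}.ncard + 1) η (h2.1 h) (by omega)).mpr h

end Aux

section Aux2

variable {α : Type}

open scoped Classical in
/-- Main invariant of the greedy construction. -/
lemma buildG {lt : Fml α → Fml α → Prop}
    (hirr : ∀ a, ¬ lt a a) (htr : ∀ a b c, lt a b → lt b c → lt a c) :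
    ∀ (l : List (Fml α)) (D0 : Set (Fml α)),
      Satisfiable D0 →
      l.Pairwise (fun a b => lt b a) →
      (∀ x ∈ l, x ∉ D0) →
      (∀ d ∈ D0, ∀ x ∈ l, lt x d) →
      (D0 ⊆ l.foldl (fun D σ => if Satisfiable (insert σ D) then insert σ D else D) D0 ∧
        l.foldl (fun D σ => if Satisfiable (insert σ D) then insert σ D else D) D0 ⊆
          D0 ∪ {x | x ∈ l}) ∧
      Satisfiable (l.foldl (fun D σ => if Satisfiable (insert σ D) then insert σ D else D) D0) ∧
      (∀ η ∈ l, (η ∈ l.foldl (fun D σ => if Satisfiable (insert σ D) then insert σ D else D) D0 ↔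
        Satisfiable (insert η {q ∈ l.foldl (fun D σ => if Satisfiable (insert σ D) then insert σ D else D) D0 | lt η q})))
  | [], D0, hsat, _, _, _ => by
      refine ⟨⟨le_refl _, ?_⟩, hsat, by simp⟩
      simp only [List.foldl_nil]
      exact Set.subset_union_left
  | σ :: t, D0, hsat, hpw, hd, hord => by
      have hpw' := List.pairwise_cons.mp hpw
      set D1 := if Satisfiable (insert σ D0) then insert σ D0 else D0 with hD1
      have hD01 : D0 ⊆ D1 := by
        rw [hD1]; split
        · exact Set.subset_insert _ _
        · exact le_refl _
      have hD1i : D1 ⊆ insert σ D0 := by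
        rw [hD1]; split
        · exact le_refl _
        · exact Set.subset_insert _ _
      have hsat1 : Satisfiable D1 := by
        rw [hD1]; split
        · assumption
        · exact hsat
      have hσnt : σ ∉ t := fun hc => hirr σ (hpw'.1 σ hc)
      have hσD1 : σ ∈ D1 ↔ Satisfiable (insert σ D0) := by
        rw [hD1]; split
        · simp_all
        · simp only [iff_false, *]
          exact hd σ (List.mem_cons_self)
      have ih := buildG hirr htr t D1 hsat1 hpw'.2
        (fun x hx => by
          intro hc
          rcases hD1i hc with rfl | hc
          · exact hσnt hx
          · exact hd x (List.mem_cons_of_mem _ hx) hc)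
        (fun d hd' x hx => by
          rcases hD1i hd' with rfl | hd'
          · exact hpw'.1 x hx
          · exact hord d hd' x (List.mem_cons_of_mem _ hx))
      rw [List.foldl_cons, ← hD1]
      set Δ := t.foldl (fun D σ => if Satisfiable (insert σ D) then insert σ D else D) D1 with hΔ
      obtain ⟨⟨hsub1, hsub2⟩, hsatΔ, hmem⟩ := ih
      have hσΔ : σ ∈ Δ ↔ σ ∈ D1 := by
        constructor
        · intro h
          rcases hsub2 h with h | h
          · exact h
          · exact absurd h hσnt
        · intro h; exact hsub1 h
      have hset : {q ∈ Δ | lt σ q} = D0 := by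
        ext q
        simp only [Set.mem_setOf_eq]
        constructor
        · rintro ⟨hq, hlt⟩
          rcases hsub2 hq with hq | hq
          · rcases hD1i hq with hq' | hq'
            · exact absurd (hq' ▸ hlt) (hirr _)
            · exact hq'
          · exact absurd (htr _ _ _ hlt (hpw'.1 q hq)) (hirr σ)
        · intro hq
          exact ⟨hsub1 (hD01 hq), hord q hq σ (List.mem_cons_self)⟩
      refine ⟨⟨hD01.trans hsub1, ?_⟩, hsatΔ, ?_⟩
      · intro x hx
        rcases hsub2 hx with hx | hx
        · rcases hD1i hx with rfl | hx
          · exact Or.inr (List.mem_cons_self)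
          · exact Or.inl hx
        · exact Or.inr (List.mem_cons_of_mem _ hx)
      · intro η hη
        rcases List.mem_cons.mp hη with rfl | hη
        · rw [hσΔ, hσD1, hset]
        · exact hmem η hη

/-- From a linear extension, extract an lt-descending enumeration. -/
lemma exists_enum {Sg : Set (Fml α)} (hfin : Sg.Finite)
    {prec lt : Fml α → Fml α → Prop} (hprec : IsReliability Sg prec)
    (hlt : IsLinearExt Sg prec lt) :
    ∃ l : List (Fml α), IsEnum Sg prec l ∧ l.Pairwise (fun a b => lt b a) := by
  classical
  obtain ⟨hmem, hirr, htr, htot, hext⟩ := hlt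
  haveI : Fintype ↥Sg := hfin.fintype
  set r : ↥Sg → ↥Sg → Prop := fun a b => lt b.1 a.1 ∨ a = b with hr
  haveI : DecidableRel r := fun a b => Classical.dec _
  haveI : IsTotal ↥Sg r := ⟨by
    intro a b
    by_cases hab : a = b
    · exact Or.inl (Or.inr hab)
    · rcases htot a.1 a.2 b.1 b.2 (fun e => hab (Subtype.ext e)) with h | h
      · exact Or.inr (Or.inl h)
      · exact Or.inl (Or.inl h)⟩
  haveI : IsTrans ↥Sg r := ⟨by
    rintro a b c (hab | rfl) (hbc | rfl)
    · exact Or.inl (htr _ _ _ hbc hab)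
    · exact Or.inl hab
    · exact Or.inl hbc
    · exact Or.inr rfl⟩
  set l1 := List.insertionSort r (Finset.univ : Finset ↥Sg).toList with hl1
  have hperm := List.perm_insertionSort r (Finset.univ : Finset ↥Sg).toList
  have hnd1 : l1.Nodup := hperm.nodup_iff.mpr (Finset.nodup_toList _)
  have hsrt : l1.Pairwise r := List.pairwise_insertionSort r _
  have hmem1 : ∀ b : ↥Sg, b ∈ l1 := fun b =>
    hperm.mem_iff.mpr (Finset.mem_toList.mpr (Finset.mem_univ b))
  set l := l1.map Subtype.val with hl
  have hnd : l.Nodup := hnd1.map Subtype.val_injective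
  have hmeml : ∀ x, x ∈ l ↔ x ∈ Sg := by
    intro x
    simp only [hl, List.mem_map]
    constructor
    · rintro ⟨b, _, rfl⟩; exact b.2
    · intro hx; exact ⟨⟨x, hx⟩, hmem1 _, rfl⟩
  have hpw : l.Pairwise (fun a b => lt b a) := by
    rw [hl, List.pairwise_map]
    refine (hsrt.and hnd1).imp ?_
    rintro a b ⟨hab | rfl, hne⟩
    · exact hab
    · exact absurd rfl hne
  have hpwget := List.pairwise_iff_get.mp hpw
  refine ⟨l, ⟨hnd, hmeml, ?_⟩, hpw⟩
  intro j k hp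
  have hlt' : lt (l.get j) (l.get k) := hext _ _ hp
  rcases lt_trichotomy (j : ℕ) (k : ℕ) with h | h | h
  · exact absurd (htr _ _ _ hlt' (hpwget j k h)) (hirr _)
  · have : j = k := Fin.ext h
    subst this
    exact absurd hlt' (hirr _)
  · exact h

/-- From an enumeration, build a linear extension for which the list is descending. -/
lemma enum_linear_ext {Sg : Set (Fml α)} {prec : Fml α → Fml α → Prop}
    (hprec : IsReliability Sg prec) {l : List (Fml α)} (he : IsEnum Sg prec l) :
    ∃ lt : Fml α → Fml α → Prop, IsLinearExt Sg prec lt ∧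
      l.Pairwise (fun a b => lt b a) := by
  classical
  obtain ⟨hnd, hmem, hord⟩ := he
  refine ⟨fun x y => x ∈ l ∧ y ∈ l ∧ l.idxOf y < l.idxOf x, ⟨?_, ?_, ?_, ?_, ?_⟩, ?_⟩
  · intro a b hab
    exact ⟨(hmem a).mp hab.1, (hmem b).mp hab.2.1⟩
  · rintro a ⟨_, _, h⟩; omega
  · rintro a b c ⟨ha, hb, h1⟩ ⟨_, hc, h2⟩
    exact ⟨ha, hc, by omega⟩
  · intro a ha b hb hne
    have ha' := (hmem a).mpr ha
    have hb' := (hmem b).mpr hb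
    rcases lt_trichotomy (l.idxOf a) (l.idxOf b) with h | h | h
    · exact Or.inr ⟨hb', ha', h⟩
    · exfalso
      apply hne
      have h1 : l.get ⟨l.idxOf a, List.idxOf_lt_length_iff.mpr ha'⟩ = a := List.idxOf_get _
      have h2 : l.get ⟨l.idxOf b, List.idxOf_lt_length_iff.mpr hb'⟩ = b := List.idxOf_get _
      rw [← h1, ← h2]
      congr 1
      exact Fin.ext h
    · exact Or.inl ⟨ha', hb', h⟩
  · intro a b hab
    have ha := (hmem a).mpr (hprec.1 a b hab).1
    have hb := (hmem b).mpr (hprec.1 a b hab).2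
    refine ⟨ha, hb, ?_⟩
    have h1 : l.get ⟨l.idxOf a, List.idxOf_lt_length_iff.mpr ha⟩ = a := List.idxOf_get _
    have h2 : l.get ⟨l.idxOf b, List.idxOf_lt_length_iff.mpr hb⟩ = b := List.idxOf_get _
    exact hord ⟨l.idxOf a, _⟩ ⟨l.idxOf b, _⟩ (by rw [h1, h2]; exact hab)
  · rw [List.pairwise_iff_get]
    intro i j hij
    refine ⟨l.get_mem _, l.get_mem _, ?_⟩
    rw [List.get_idxOf hnd, List.get_idxOf hnd]
    exact hij

end Aux2

section Aux3

variable {α : Type}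

open scoped Classical in
lemma mrc_fp {Sg : Set (Fml α)} {lt : Fml α → Fml α → Prop}
    (hirr : ∀ a, ¬ lt a a) (htr : ∀ a b c, lt a b → lt b c → lt a c)
    {l : List (Fml α)} (hmeml : ∀ x, x ∈ l ↔ x ∈ Sg)
    (hpw : l.Pairwise (fun a b => lt b a)) :
    FP Sg lt (mrcBuild l) := by
  have hsat0 : Satisfiable (∅ : Set (Fml α)) :=
    ⟨∅, fun ψ h => absurd h (Set.notMem_empty ψ)⟩
  have hb := buildG hirr htr l ∅ hsat0 hpw (fun x _ => Set.notMem_empty x)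
    (fun d hd => absurd hd (Set.notMem_empty d))
  obtain ⟨⟨_, hsub⟩, _, hmem⟩ := hb
  have heq : mrcBuild l =
      l.foldl (fun D σ => if Satisfiable (insert σ D) then insert σ D else D) ∅ := rfl
  constructor
  · rw [heq]
    intro x hx
    rcases hsub hx with hx | hx
    · exact absurd hx (Set.notMem_empty x)
    · exact (hmeml x).mp hx
  · intro η hη
    rw [heq]
    exact hmem η ((hmeml η).mpr hη)

end Aux3

/-- The theorems of a reliability theory are the intersection of
the limit belief sets `B∞^{≺'}` over all strict linear extensions `≺'` of `≺`. -/
theorem theorems_eq_inter_belief_sets {α : Type} (Sg : Set (Fml α))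
    (hfin : Sg.Finite) (prec : Fml α → Fml α → Prop)
    (hprec : IsReliability Sg prec) :
    ThR Sg prec =
      {φ | ∀ lt, IsLinearExt Sg prec lt →
        ∀ Δ, Δ = Sg \ OutA (Ainf Sg lt) Δ →
          ∃ P, Arg.sup P φ ∈ Ainf Sg lt ∧ P ⊆ Δ} := by
  ext φ
  simp only [ThR, Set.mem_setOf_eq]
  constructor
  · intro h lt hlt Δ hfix
    have hirr := hlt.2.1
    have htr := hlt.2.2.1
    obtain ⟨l, henum, hpw⟩ := exists_enum hfin hprec hlt
    have hfp1 : FP Sg lt (mrcBuild l) := mrc_fp hirr htr henum.2.1 hpw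
    have hfp2 : FP Sg lt Δ := (fp_iff hirr hfin Δ).mp hfix
    have heq : Δ = mrcBuild l := fp_unique hirr htr hfin hfp2 hfp1
    have hent : Entails Δ φ := h Δ ⟨l, henum, heq⟩
    have hΔSg : Δ ⊆ Sg := hfp2.1
    have hder : Derivable Sg lt (.sup Δ φ) :=
      derive_of_entails hΔSg (hfin.subset hΔSg) hent
    exact ⟨Δ, hder, le_refl _⟩
  · intro h D hD
    obtain ⟨l, henum, rfl⟩ := hD
    obtain ⟨lt, hlt, hpw⟩ := enum_linear_ext hprec henum
    have hirr := hlt.2.1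
    have htr := hlt.2.2.1
    have hfp : FP Sg lt (mrcBuild l) := mrc_fp hirr htr henum.2.1 hpw
    have hfix : mrcBuild l = Sg \ OutA (Ainf Sg lt) (mrcBuild l) :=
      (fp_iff hirr hfin (mrcBuild l)).mpr hfp
    obtain ⟨P, hder, hPΔ⟩ := h lt hlt (mrcBuild l) hfix
    have hent : Entails P φ := (derivable_sound hder P φ rfl).2
    intro M hM
    exact hent M (fun τ hτ => hM τ (hPΔ hτ))
end

section
/- Smoothness of the preference relation: for a reliability theory ⟨Σ, ≺⟩, for every formula α and every interpretation M with M ⊨ α, either M is ⊏-maximal among interpretations satisfying α (no N with N ⊨ α and M ⊏ N), or there exists an interpretation N with N ⊨ α, M ⊏ N, and N is ⊏-maximal among interpretations satisfying α. Together with irreflexivity and transitivity of ⊏, this makes the inverse relation a preferential model in the sense of Kraus, Lehmann and Magidor. -/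
/-- In a finite set, an irreflexive transitive relation (on that set) has,
for every element, nothing above some maximal element. -/
lemma exists_max_aux {β : Type} (r : β → β → Prop) (s : Set β) (hs : s.Finite) :
    (∀ a ∈ s, ¬ r a a) → (∀ a ∈ s, ∀ b ∈ s, ∀ c ∈ s, r a b → r b c → r a c) →
    s.Nonempty → ∃ m ∈ s, ∀ x ∈ s, ¬ r m x := by
  induction s, hs using Set.Finite.induction_on with
  | empty => intro _ _ h; exact absurd h (by simp)
  | @insert a t hat htfin ih =>
    intro hirr htr _
    rcases t.eq_empty_or_nonempty with rfl | htne
    · exact ⟨a, Set.mem_insert _ _, by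
        intro x hx
        rcases hx with rfl | hx
        · exact hirr x (Set.mem_insert _ _)
        · exact absurd hx (by simp)⟩
    · obtain ⟨m, hm, hmax⟩ := ih
        (fun x hx => hirr x (Set.mem_insert_of_mem _ hx))
        (fun x hx y hy z hz => htr x (Set.mem_insert_of_mem _ hx)
          y (Set.mem_insert_of_mem _ hy) z (Set.mem_insert_of_mem _ hz)) htne
      by_cases hma : r m a
      · refine ⟨a, Set.mem_insert _ _, ?_⟩
        intro x hx hax
        rcases hx with rfl | hx
        · exact hirr x (Set.mem_insert _ _) hax
        · exact hmax x hx (htr m (Set.mem_insert_of_mem _ hm) a (Set.mem_insert _ _)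
            x (Set.mem_insert_of_mem _ hx) hma hax)
      · refine ⟨m, Set.mem_insert_of_mem _ hm, ?_⟩
        intro x hx hmx
        rcases hx with rfl | hx
        · exact hma hmx
        · exact hmax x hx hmx

/-- The preference relation at the level of premiss sets. -/
def QRel {β : Type} (prec : β → β → Prop) (A B : Set β) : Prop :=
  A ≠ B ∧ ∀ φ ∈ A \ B, ∃ ψ ∈ B \ A, prec φ ψ

lemma qrel_trans {β : Type} (prec : β → β → Prop)
    (hirr : ∀ a, ¬ prec a a) (htr : ∀ a b c, prec a b → prec b c → prec a c)
    {A B C : Set β} (hA : A.Finite) (hB : B.Finite)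
    (h1 : QRel prec A B) (h2 : QRel prec B C) : QRel prec A C := by
  obtain ⟨hAB, f1⟩ := h1
  obtain ⟨hBC, f2⟩ := h2
  constructor
  · intro hAC
    subst hAC
    -- symmetric difference of A and B, nonempty and finite
    have hne : ∃ x, (x ∈ A ∧ x ∉ B) ∨ (x ∈ B ∧ x ∉ A) := by
      by_contra h
      push_neg at h
      apply hAB
      ext x
      have := h x
      tauto
    obtain ⟨x0, hx0⟩ := hne
    have hDfin : ((A \ B) ∪ (B \ A)).Finite :=
      Set.Finite.union (hA.subset (Set.diff_subset)) (hB.subset (Set.diff_subset))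
    obtain ⟨m, hm, hmax⟩ := exists_max_aux prec _ hDfin
      (fun a _ => hirr a) (fun a _ b _ c _ => htr a b c)
      ⟨x0, by rcases hx0 with h | h
              exacts [Or.inl ⟨h.1, h.2⟩, Or.inr ⟨h.1, h.2⟩]⟩
    rcases hm with hm | hm
    · obtain ⟨ψ, hψ, hpψ⟩ := f1 m hm
      exact hmax ψ (Or.inr hψ) hpψ
    · obtain ⟨ψ, hψ, hpψ⟩ := f2 m hm
      exact hmax ψ (Or.inl hψ) hpψ
  · intro φ hφ
    -- the set of elements of (A\B) ∪ (B\C) at or above φ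
    set S : Set β := {x | (x ∈ A \ B ∨ x ∈ B \ C) ∧ (x = φ ∨ prec φ x)} with hS
    have hSfin : S.Finite := by
      apply (Set.Finite.union hA hB).subset
      rintro x ⟨hx1 | hx1, _⟩
      · exact Or.inl hx1.1
      · exact Or.inr hx1.1
    have hSne : S.Nonempty := by
      refine ⟨φ, ?_, Or.inl rfl⟩
      by_cases hφB : φ ∈ B
      · exact Or.inr ⟨hφB, hφ.2⟩
      · exact Or.inl ⟨hφ.1, hφB⟩
    obtain ⟨m, ⟨hm1, hm2⟩, hmax⟩ := exists_max_aux prec S hSfin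
      (fun a _ => hirr a) (fun a _ b _ c _ => htr a b c) hSne
    have hφm : ∀ ψ, prec m ψ → prec φ ψ := by
      intro ψ h
      rcases hm2 with rfl | hp
      · exact h
      · exact htr _ _ _ hp h
    rcases hm1 with hm1 | hm1
    · obtain ⟨χ, hχ, hpχ⟩ := f1 m hm1
      by_cases hχC : χ ∈ C
      · exact ⟨χ, ⟨hχC, hχ.2⟩, hφm χ hpχ⟩
      · exact absurd hpχ (hmax χ ⟨Or.inr ⟨hχ.1, hχC⟩, Or.inr (hφm χ hpχ)⟩)
    · obtain ⟨χ, hχ, hpχ⟩ := f2 m hm1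
      by_cases hχA : χ ∈ A
      · exact absurd hpχ (hmax χ ⟨Or.inl ⟨hχA, hχ.2⟩, Or.inr (hφm χ hpχ)⟩)
      · exact ⟨χ, ⟨hχ.1, hχA⟩, hφm χ hpχ⟩

/-- Smoothness of the preference relation: `⊏` is irreflexive and
transitive and, for every formula `a`, every interpretation satisfying `a` is
either `⊏`-maximal among models of `a` or below such a `⊏`-maximal one; hence
the inverse relation yields a KLM preferential model. -/
theorem pref_smooth {α : Type} (Sg : Set (Fml α)) (hfin : Sg.Finite)
    (prec : Fml α → Fml α → Prop) (hprec : IsReliability Sg prec) :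
    (∀ M : Set α, ¬ Pref Sg prec M M) ∧
    (∀ L M N : Set α, Pref Sg prec L M → Pref Sg prec M N → Pref Sg prec L N) ∧
    (∀ (a : Fml α) (M : Set α), Fml.sat M a →
      (¬ ∃ N : Set α, Fml.sat N a ∧ Pref Sg prec M N) ∨
      (∃ N : Set α, Fml.sat N a ∧ Pref Sg prec M N ∧
        ¬ ∃ L : Set α, Fml.sat L a ∧ Pref Sg prec N L)) := by
  obtain ⟨hmem, hirr, hasym, htr⟩ := hprec
  have hPremSub : ∀ M : Set α, PremOf Sg M ⊆ Sg := fun M φ h => h.1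
  have hPremFin : ∀ M : Set α, (PremOf Sg M).Finite :=
    fun M => hfin.subset (hPremSub M)
  have hPrefQ : ∀ M N : Set α,
      Pref Sg prec M N ↔ QRel prec (PremOf Sg M) (PremOf Sg N) := by
    intro M N; rfl
  have hPtrans : ∀ L M N : Set α,
      Pref Sg prec L M → Pref Sg prec M N → Pref Sg prec L N := by
    intro L M N h1 h2
    rw [hPrefQ] at *
    exact qrel_trans prec hirr htr (hPremFin L) (hPremFin M) h1 h2
  refine ⟨?_, hPtrans, ?_⟩
  · intro M hM
    exact hM.1 rfl
  · intro a M hMa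
    by_cases h : ∃ N : Set α, Fml.sat N a ∧ Pref Sg prec M N
    · right
      obtain ⟨N₀, hN₀a, hMN₀⟩ := h
      set T : Set (Set (Fml α)) :=
        {S | ∃ N : Set α, Fml.sat N a ∧ Pref Sg prec M N ∧ PremOf Sg N = S} with hT
      have hTfin : T.Finite := by
        apply (Set.Finite.finite_subsets hfin).subset
        rintro S ⟨N, _, _, rfl⟩
        exact hPremSub N
      have hTne : T.Nonempty := ⟨PremOf Sg N₀, N₀, hN₀a, hMN₀, rfl⟩
      have hTsub : ∀ S ∈ T, S.Finite := by
        rintro S ⟨N, _, _, rfl⟩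
        exact hPremFin N
      obtain ⟨S, hSmem, hSmax⟩ := exists_max_aux (QRel prec) T hTfin
        (fun A _ hAA => hAA.1 rfl)
        (fun A hA B hB C _ => qrel_trans prec hirr htr (hTsub A hA) (hTsub B hB))
        hTne
      obtain ⟨N, hNa, hMN, hNS⟩ := hSmem
      refine ⟨N, hNa, hMN, ?_⟩
      rintro ⟨L, hLa, hNL⟩
      have hML : Pref Sg prec M L := hPtrans M N L hMN hNL
      have hLT : PremOf Sg L ∈ T := ⟨L, hLa, hML, rfl⟩
      exact hSmax (PremOf Sg L) hLT (hNS ▸ (hPrefQ N L).mp hNL)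
    · left
      exact h
end
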